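/- Let C be a class of matrices. If C contains a matrix having a column with at least two nonzero entries, then C contains a matrix D having a column with two nonzero entries of the same sign, i.e., there exist an index j and distinct indices i ≠ k with D_{i,j}·D_{k,j} > 0. -/

import Mathlib

/-- The permutation matrix of a permutation `σ`: its `(i, j)` entry is `1` iff `i = σ j`. -/
def permMat {m : ℕ} (σ : Equiv.Perm (Fin m)) : Matrix (Fin m) (Fin m) ℤ :=
  Matrix.of fun i j => if i = σ j then 1 else 0

/-- `extMat A n` is the block-diagonal matrix `diag(A, I_n)`. -/
def extMat {k : ℕ} (A : Matrix (Fin k) (Fin k) ℤ) (n : ℕ) :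
    Matrix (Fin (k + n)) (Fin (k + n)) ℤ :=
  Matrix.reindex finSumFinEquiv finSumFinEquiv
    (Matrix.fromBlocks A 0 0 (1 : Matrix (Fin n) (Fin n) ℤ))

/-- A *class of matrices*: a set of square integer matrices of arbitrary sizes, closed
under conjugation by permutation matrices, extension by identity blocks, containing all
identity matrices, and closed under products of equal-size matrices. -/
structure MatrixClass where
  carrier : ∀ k : ℕ, Set (Matrix (Fin k) (Fin k) ℤ)
  perm_mem : ∀ {k : ℕ} (A : Matrix (Fin k) (Fin k) ℤ), A ∈ carrier k →
    ∀ σ : Equiv.Perm (Fin k), permMat σ * A * permMat σ⁻¹ ∈ carrier k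
  ext_mem : ∀ {k : ℕ} (A : Matrix (Fin k) (Fin k) ℤ), A ∈ carrier k →
    ∀ n : ℕ, 1 ≤ n → extMat A n ∈ carrier (k + n)
  one_mem : ∀ n : ℕ, 1 ≤ n → (1 : Matrix (Fin n) (Fin n) ℤ) ∈ carrier n
  mul_mem : ∀ {k : ℕ} (A B : Matrix (Fin k) (Fin k) ℤ),
    A ∈ carrier k → B ∈ carrier k → A * B ∈ carrier k

lemma permMat_conj {m : ℕ} (σ : Equiv.Perm (Fin m)) (A : Matrix (Fin m) (Fin m) ℤ)
    (p q : Fin m) : (permMat σ * A * permMat σ⁻¹) p q = A (σ⁻¹ p) (σ⁻¹ q) := by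
  have h : ∀ x : Fin m, (p = σ x) ↔ (σ⁻¹ p = x) := fun x =>
    ⟨fun hh => by rw [hh]; exact σ.symm_apply_apply x,
     fun hh => by rw [← hh]; exact (σ.apply_symm_apply p).symm⟩
  have h2 : ∀ x : Fin m, (σ x = q) ↔ (σ⁻¹ q = x) := fun x =>
    ⟨fun hh => by rw [← hh]; exact σ.symm_apply_apply x,
     fun hh => by rw [← hh]; exact σ.apply_symm_apply q⟩
  simp [Matrix.mul_apply, permMat, Finset.sum_ite_eq, Finset.sum_ite_eq',
    Equiv.eq_symm_apply, h, h2]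

lemma extMat_cc {k : ℕ} (A : Matrix (Fin k) (Fin k) ℤ) (p q : Fin k) :
    extMat A 1 p.castSucc q.castSucc = A p q := by
  simp [extMat, Fin.castSucc]

lemma extMat_lc {k : ℕ} (A : Matrix (Fin k) (Fin k) ℤ) (q : Fin k) :
    extMat A 1 (Fin.last k) q.castSucc = 0 := by
  have : Fin.last k = finSumFinEquiv (Sum.inr (0 : Fin 1)) := by
    simp [finSumFinEquiv]; rfl
  rw [this]
  simp [extMat, Fin.castSucc]

lemma extMat_cl {k : ℕ} (A : Matrix (Fin k) (Fin k) ℤ) (p : Fin k) :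
    extMat A 1 p.castSucc (Fin.last k) = 0 := by
  have : Fin.last k = finSumFinEquiv (Sum.inr (0 : Fin 1)) := by
    simp [finSumFinEquiv]; rfl
  rw [this]
  simp [extMat, Fin.castSucc]

lemma extMat_ll {k : ℕ} (A : Matrix (Fin k) (Fin k) ℤ) :
    extMat A 1 (Fin.last k) (Fin.last k) = 1 := by
  have : Fin.last k = finSumFinEquiv (Sum.inr (0 : Fin 1)) := by
    simp [finSumFinEquiv]; rfl
  rw [this]
  simp [extMat]

theorem class_col_same_sign (C : MatrixClass)
    (h : ∃ (k : ℕ) (A : Matrix (Fin k) (Fin k) ℤ), A ∈ C.carrier k ∧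
      ∃ (j i₁ i₂ : Fin k), i₁ ≠ i₂ ∧ A i₁ j ≠ 0 ∧ A i₂ j ≠ 0) :
    ∃ (k : ℕ) (D : Matrix (Fin k) (Fin k) ℤ), D ∈ C.carrier k ∧
      ∃ (j i₁ i₂ : Fin k), i₁ ≠ i₂ ∧ 0 < D i₁ j * D i₂ j := by
  obtain ⟨k, A, hA, j, i₁, i₂, hne, ha, hb⟩ := h
  by_cases hcase : ∃ i i' : Fin k, i ≠ i' ∧ 0 < A i j * A i' j
  · obtain ⟨i, i', hii, hpos⟩ := hcase
    exact ⟨k, A, hA, j, i, i', hii, hpos⟩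
  push_neg at hcase
  set a := A i₁ j with ha'
  set b := A i₂ j with hb'
  have hab : a * b < 0 :=
    lt_of_le_of_ne (not_lt.mp (by simpa using hcase i₁ i₂ hne)) (mul_ne_zero ha hb)
  have key : ∀ p : Fin k, p ≠ i₁ → p ≠ i₂ → A p j = 0 := by
    intro p hp1 hp2
    by_contra hp
    have h1 : A p j * a ≤ 0 := not_lt.mp (by simpa using hcase p i₁ hp1)
    have h2 : A p j * b ≤ 0 := not_lt.mp (by simpa using hcase p i₂ hp2)
    have h3 : 0 < A p j * A p j := mul_self_pos.mpr hp
    nlinarith [mul_nonneg (neg_nonneg.2 h1) (neg_nonneg.2 h2)]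
  -- construction
  set l := Fin.last k with hl
  have hel : ∀ p : Fin k, p.castSucc ≠ l := fun p => (Fin.castSucc_lt_last p).ne
  have hcs : i₁.castSucc ≠ i₂.castSucc := fun hh => hne (Fin.castSucc_injective _ hh)
  set σ₁ : Equiv.Perm (Fin (k+1)) := Equiv.swap i₂.castSucc j.castSucc with hσ₁
  set τ : Equiv.Perm (Fin (k+1)) := (Equiv.swap (σ₁ i₁.castSucc) l) * σ₁ with hτ
  have hτ1 : τ i₁.castSucc = l := by
    simp only [hτ, Equiv.Perm.mul_apply]
    exact Equiv.swap_apply_left _ _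
  have hτ2 : τ i₂.castSucc = j.castSucc := by
    have h1 : σ₁ i₂.castSucc = j.castSucc := Equiv.swap_apply_left _ _
    have h2 : j.castSucc ≠ σ₁ i₁.castSucc := by
      rw [← h1]; exact fun hh => hcs (σ₁.injective hh).symm
    simp only [hτ, Equiv.Perm.mul_apply, h1]
    exact Equiv.swap_apply_of_ne_of_ne h2 (hel j)
  set E := extMat A 1 with hE
  set F := permMat τ * E * permMat τ⁻¹ with hF
  set D := E * F with hD
  have hDmem : D ∈ C.carrier (k+1) :=
    C.mul_mem _ _ (C.ext_mem A hA 1 le_rfl) (C.perm_mem _ (C.ext_mem A hA 1 le_rfl) τ)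
  set c := τ j.castSucc with hc
  have Ecol : ∀ p : Fin (k+1), E p j.castSucc =
      (if p = i₁.castSucc then a else 0) + (if p = i₂.castSucc then b else 0) := by
    intro p
    refine Fin.lastCases ?_ ?_ p
    · rw [hE, extMat_lc]
      rw [if_neg (hel i₁).symm.elim, if_neg (hel i₂).symm.elim]  -- fix
      ring
    · intro q
      rw [hE, extMat_cc]
      by_cases hq1 : q = i₁
      · subst hq1
        rw [if_pos rfl, if_neg hcs]
        ring
      · by_cases hq2 : q = i₂
        · subst hq2
          rw [if_neg (fun hh => hq1 (Fin.castSucc_injective _ hh)), if_pos rfl]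
          ring
        · rw [key q hq1 hq2,
            if_neg (fun hh => hq1 (Fin.castSucc_injective _ hh)),
            if_neg (fun hh => hq2 (Fin.castSucc_injective _ hh))]
          ring
  have Fcol : ∀ q : Fin (k+1), F q c =
      (if q = l then a else 0) + (if q = j.castSucc then b else 0) := by
    intro q
    rw [hF, permMat_conj]
    have hcq : τ⁻¹ c = j.castSucc := by rw [hc]; exact τ.symm_apply_apply _
    rw [hcq, Ecol]
    congr 1
    · congr 1
      have : (τ⁻¹ q = i₁.castSucc) = (q = l) := by
        rw [Equiv.Perm.inv_def, Equiv.symm_apply_eq, hτ1, eq_comm]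
      rw [this]
    · congr 1
      have : (τ⁻¹ q = i₂.castSucc) = (q = j.castSucc) := by
        rw [Equiv.Perm.inv_def, Equiv.symm_apply_eq, hτ2, eq_comm]
      rw [this]
  have hlj : l ≠ j.castSucc := (hel j).symm
  have hDcol : ∀ i : Fin (k+1), D i c = E i l * a + E i j.castSucc * b := by
    intro i
    rw [hD, Matrix.mul_apply]
    simp only [Fcol, mul_add, mul_ite, mul_zero, Finset.sum_add_distrib,
      Finset.sum_ite_eq', Finset.mem_univ, if_true]
  have hv1 : D l c = a := by
    rw [hDcol]; simp only [hE, hl, extMat_ll, extMat_lc]; ring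
  have hv2 : D i₁.castSucc c = a * b := by
    rw [hDcol]; simp only [hE, hl, extMat_cl, extMat_cc]; ring
  have hv3 : D i₂.castSucc c = b * b := by
    rw [hDcol]; simp only [hE, hl, extMat_cl, extMat_cc]; ring
  rcases lt_or_gt_of_ne hb with hbneg | hbpos
  · -- b < 0, hence a > 0 : pair (l, i₂.castSucc)
    refine ⟨k+1, D, hDmem, c, l, i₂.castSucc, (hel i₂).symm, ?_⟩
    rw [hv1, hv3]
    nlinarith
  · -- b > 0, hence a < 0 : pair (l, i₁.castSucc)
    refine ⟨k+1, D, hDmem, c, l, i₁.castSucc, (hel i₁).symm, ?_⟩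
    rw [hv1, hv2]
    nlinarith
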